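/- Let J ∈ ℝ be a constant, I ⊆ ℝ a nonempty open interval, h : I → ℝ a function with h(t) > 0 for all t ∈ I, and a, b, α, H : I → ℝ differentiable functions satisfying the ODE system (S). If P1(J, a(t), b(t), α(t), H(t)) = 0 and P2(J, a(t), b(t), α(t), H(t)) = 0 for all t ∈ I, then b(t) = 0 for all t ∈ I. -/

import Mathlib

namespace WEFE

noncomputable section

variable {R : Type*} [CommRing R]

/-- The polynomial P1 in the variables (J, a, b, α, H). -/
def P1 (J a b α H : R) : R :=
  -(a*b^2*H) - 8*J^2*a*H - 4*J*a*H*α + 6*J*a^2*H + 2*J*a + a*H*α^2 - a^3*H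
    + 2*a*α - 2*a^2 - 2*J*b^2*H + 2*b^2*H*α + 2*b^2 + 8*J^2*H*α - 2*J*H*α^2 - 2*J*α

/-- The polynomial P2 in the variables (J, a, b, α, H). -/
def P2 (J a b α H : R) : R :=
  -(8*J*a*H) + 2*a*H*α + a^2*H + 2*a + b^2*H + 12*J^2*H - 4*J*H*α - 3*J + α

/-- The polynomial P3 in the variables (J, a, b, α, H). -/
def P3 (J a b α H : R) : R :=
  8*J*a*b^2*H - 11*a*b^2*H*α + 4*a^2*b^2*H - 22*a*b^2 - 96*J^3*a*H - 64*J^2*a*H*α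
    + 108*J^2*a^2*H + 24*J^2*a + 6*J*a^2*H*α + 28*J*a*H*α^2 - 40*J*a^3*H + 30*J*a*α
    - 34*J*a^2 + a^3*H*α - 3*a^2*H*α^2 - 3*a*H*α^3 + 5*a^4*H - 6*a^2*α + 4*a*α^2
    + 10*a^3 - 36*J^2*b^2*H + 30*J*b^2*H*α + 30*J*b^2 - 3*b^2*H*α^2 - b^4*H + 2*b^2*α
    + 96*J^3*H*α - 44*J^2*H*α^2 - 24*J^2*α + 6*J*H*α^3 + 4*J*α^2

/-- The polynomial P4 in the variables (J, a, b, α, H). -/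
def P4 (J a b α H : R) : R :=
  -(a*b^2*H) - 24*J^2*a*H + 8*J*a*H*α + 8*J*a^2*H + 6*J*a - a*H*α^2 - a^2*H*α - a^3*H
    - 2*a^2 + b^2*H*α + 2*b^2 + 24*J^3*H - 12*J^2*H*α - 6*J^2 + 2*J*H*α^2 + 3*J*α - α^2

/-- The polynomial P5 in the variables (J, a, b, α, H). -/
def P5 (J a b α H : R) : R :=
  676*J^2*a*b^2*H - 514*J*a*b^2*H*α - 92*J*a^2*b^2*H - 900*J*a*b^2 + 94*a^2*b^2*H*α
    + 51*a*b^2*H*α^2 - 20*a^3*b^2*H + 20*a*b^4*H + 12*a*b^2*α + 280*a^2*b^2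
    - 1824*J^4*a*H - 1536*J^3*a*H*α + 2744*J^3*a^2*H + 456*J^3*a + 240*J^2*a^2*H*α
    + 1012*J^2*a*H*α^2 - 1564*J^2*a^3*H + 692*J^2*a*α - 840*J^2*a^2 + 70*J*a^3*H*α
    - 234*J*a^2*H*α^2 - 210*J*a*H*α^3 + 404*J*a^4*H - 246*J*a^2*α - 202*J*a*α^2
    + 460*J*a^3 - 17*a^4*H*α + 15*a^3*H*α^2 + 27*a^2*H*α^3 + 15*a*H*α^4 - 40*a^5*H
    + 20*a^3*α + 46*a^2*α^2 + 14*a*α^3 - 80*a^4 - 840*J^3*b^2*H + 696*J^2*b^2*H*α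
    + 672*J^2*b^2 - 138*J*b^2*H*α^2 - 16*J*b^4*H + 38*J*b^2*α + 9*b^2*H*α^3
    - 9*b^4*H*α - 18*b^2*α^2 - 24*b^4 + 1824*J^4*H*α - 1208*J^3*H*α^2 - 456*J^3*α
    + 312*J^2*H*α^3 + 148*J^2*α^2 - 30*J*H*α^4 - 12*J*α^3

/-- The polynomial P6 in the variables (J, a, b, α, H). -/
def P6 (J a b α H : R) : R :=
  -(7*a*b^2*H*α) + 4*a^2*b^2*H - 22*a*b^2 - 336*J^3*a*H + 160*J^2*a*H + 184*J^2*a^2*H*α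
    + 84*J^2*a - 36*J*a*H*α^2 - 48*J*a^2*H*α - 48*J*a^3*H - 12*J*a*α - 50*J*a^2
    + 3*a*H*α^3 + 5*a^2*H*α^2 + 5*a^3*H*α + 5*a^4*H + 2*a*α^2 + 2*a^2*α + 10*a^3
    - 24*J^2*b^2*H + 24*J*b^2*H*α + 38*J*b^2 - 3*b^2*H*α^2 - b^4*H - 2*b^2*α
    + 240*J^4*H - 168*J^3*H*α - 60*J^3 + 52*J^2*H*α^2 + 42*J^2*α - 6*J*H*α^3
    - 22*J*α^2 + 4*α^3

/-- The polynomial G = 16b⁸ + 8b⁶α² + b⁴α⁴. -/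
def G (J a b α H : R) : R :=
  16*b^8 + 8*b^6*α^2 + b^4*α^4

end

end WEFE

open WEFE

set_option maxHeartbeats 4000000 in
/-- If differentiable functions a, b, α, H on a nonempty open interval I satisfy the
ODE system (S) (with λ = 6J − 2a − α, h > 0 on I), and the polynomial constraints
P1 = P2 = 0 hold along (J, a, b, α, H) on I, then b ≡ 0 on I. -/
theorem b_vanishes_of_P1_P2
    (J : ℝ) (I : Set ℝ) (hIopen : IsOpen I) (hIne : I.Nonempty) (hIconn : I.OrdConnected)
    (h a b α H : ℝ → ℝ) (hpos : ∀ t ∈ I, 0 < h t)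
    (hda : ∀ t ∈ I, HasDerivAt a
      (h t * ((b t) ^ 2 + ((6 * J - 2 * a t - α t) - a t) * (a t - 2 * J))) t)
    (hdb : ∀ t ∈ I, HasDerivAt b
      (h t * b t * ((6 * J - 2 * a t - α t) + 2 * J - 2 * a t)) t)
    (hdα : ∀ t ∈ I, HasDerivAt α
      (h t * ((6 * J - 2 * a t - α t) - α t) * (α t - 2 * J)) t)
    (hdH : ∀ t ∈ I, HasDerivAt H
      (2 * h t * (1 - H t * ((6 * J - 2 * a t - α t) - 2 * J))) t)
    (hP1 : ∀ t ∈ I, P1 J (a t) (b t) (α t) (H t) = 0)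
    (hP2 : ∀ t ∈ I, P2 J (a t) (b t) (α t) (H t) = 0) :
    ∀ t ∈ I, b t = 0 := by  -- Step 1: E1 := (1/h)·(d/dt) P1 vanishes on I
  have hE1 : ∀ t ∈ I, (-3) * a t ^ 1 * α t ^ 3 * H t ^ 1 + (-3) * a t ^ 2 * α t ^ 2 * H t ^ 1 + (1) * a t ^ 3 * α t ^ 1 * H t ^ 1 + (5) * a t ^ 4 * H t ^ 1 + (6) * J ^ 1 * α t ^ 3 * H t ^ 1 + (28) * J ^ 1 * a t ^ 1 * α t ^ 2 * H t ^ 1 + (6) * J ^ 1 * a t ^ 2 * α t ^ 1 * H t ^ 1 + (-40) * J ^ 1 * a t ^ 3 * H t ^ 1 + (-44) * J ^ 2 * α t ^ 2 * H t ^ 1 + (-64) * J ^ 2 * a t ^ 1 * α t ^ 1 * H t ^ 1 + (108) * J ^ 2 * a t ^ 2 * H t ^ 1 + (96) * J ^ 3 * α t ^ 1 * H t ^ 1 + (-96) * J ^ 3 * a t ^ 1 * H t ^ 1 + (-3) * b t ^ 2 * α t ^ 2 * H t ^ 1 + (-11) * a t ^ 1 * b t ^ 2 * α t ^ 1 * H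 t ^ 1 + (4) * a t ^ 2 * b t ^ 2 * H t ^ 1 + (30) * J ^ 1 * b t ^ 2 * α t ^ 1 * H t ^ 1 + (8) * J ^ 1 * a t ^ 1 * b t ^ 2 * H t ^ 1 + (-36) * J ^ 2 * b t ^ 2 * H t ^ 1 + (-1) * b t ^ 4 * H t ^ 1 + (-4) * a t ^ 1 * α t ^ 2 + (-6) * a t ^ 2 * α t ^ 1 + (10) * a t ^ 3 + (4) * J ^ 1 * α t ^ 2 + (30) * J ^ 1 * a t ^ 1 * α t ^ 1 + (-34) * J ^ 1 * a t ^ 2 + (-24) * J ^ 2 * α t ^ 1 + (24) * J ^ 2 * a t ^ 1 + (2) * b t ^ 2 * α t ^ 1 + (-22) * a t ^ 1 * b t ^ 2 + (30) * J ^ 1 * b t ^ 2 = 0 := by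
    intro t ht
    have ha := hda t ht
    have hb := hdb t ht
    have hα := hdα t ht
    have hH := hdH t ht
    have hF : HasDerivAt (fun s => (1) * a s ^ 1 * α s ^ 2 * H s ^ 1 + (-1) * a s ^ 3 * H s ^ 1 + (-2) * J ^ 1 * α s ^ 2 * H s ^ 1 + (-4) * J ^ 1 * a s ^ 1 * α s ^ 1 * H s ^ 1 + (6) * J ^ 1 * a s ^ 2 * H s ^ 1 + (8) * J ^ 2 * α s ^ 1 * H s ^ 1 + (-8) * J ^ 2 * a s ^ 1 * H s ^ 1 + (2) * b s ^ 2 * α s ^ 1 * H s ^ 1 + (-1) * a s ^ 1 * b s ^ 2 * H s ^ 1 + (-2) * J ^ 1 * b s ^ 2 * H s ^ 1 + (2) * a s ^ 1 * α s ^ 1 + (-2) * a s ^ 2 + (-2) * J ^ 1 * α s ^ 1 + (2) * J ^ 1 * a s ^ 1 + (2) * b s ^ 2) _ t := ((((((((((((((((((hasDerivAt_const t ((1))).mul (ha.pow 1)).mul (hα.pow 2)).mul (hH.pow 1)).add (((hasDerivAt_const t ((-1))).mul (ha.pow 3)).mul (hH.pow 1))).add (((hasDerivAt_const t ((-2) *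 J ^ 1)).mul (hα.pow 2)).mul (hH.pow 1))).add ((((hasDerivAt_const t ((-4) * J ^ 1)).mul (ha.pow 1)).mul (hα.pow 1)).mul (hH.pow 1))).add (((hasDerivAt_const t ((6) * J ^ 1)).mul (ha.pow 2)).mul (hH.pow 1))).add (((hasDerivAt_const t ((8) * J ^ 2)).mul (hα.pow 1)).mul (hH.pow 1))).add (((hasDerivAt_const t ((-8) * J ^ 2)).mul (ha.pow 1)).mul (hH.pow 1))).add ((((hasDerivAt_const t ((2))).mul (hb.pow 2)).mul (hα.pow 1)).mul (hH.pow 1))).add ((((hasDerivAt_const t ((-1))).mul (ha.pow 1)).mul (hb.pow 2)).mul (hH.pow 1))).add (((hasDerivAt_const t ((-2) * J ^ 1)).mul (hb.pow 2)).mul (hH.pow 1))).add (((hasDerivAt_const t ((2))).mul (ha.pow 1)).mul (hα.pow 1))).add ((hasDerivAt_const t ((-2))).mul (ha.pow 2))).add ((hasDerivAt_const t ((-2) * J ^ 1)).mul (hα.pow 1))).add ((hasDerivAt_const t ((2) * J ^ 1)).mul (ha.pow 1))).add ((hasDerivAt_const t ((2))).mul (hb.pow 2)))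
    have h0 : HasDerivAt (fun s => (1) * a s ^ 1 * α s ^ 2 * H s ^ 1 + (-1) * a s ^ 3 * H s ^ 1 + (-2) * J ^ 1 * α s ^ 2 * H s ^ 1 + (-4) * J ^ 1 * a s ^ 1 * α s ^ 1 * H s ^ 1 + (6) * J ^ 1 * a s ^ 2 * H s ^ 1 + (8) * J ^ 2 * α s ^ 1 * H s ^ 1 + (-8) * J ^ 2 * a s ^ 1 * H s ^ 1 + (2) * b s ^ 2 * α s ^ 1 * H s ^ 1 + (-1) * a s ^ 1 * b s ^ 2 * H s ^ 1 + (-2) * J ^ 1 * b s ^ 2 * H s ^ 1 + (2) * a s ^ 1 * α s ^ 1 + (-2) * a s ^ 2 + (-2) * J ^ 1 * α s ^ 1 + (2) * J ^ 1 * a s ^ 1 + (2) * b s ^ 2) 0 t := by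
      have hev : (fun s => (1) * a s ^ 1 * α s ^ 2 * H s ^ 1 + (-1) * a s ^ 3 * H s ^ 1 + (-2) * J ^ 1 * α s ^ 2 * H s ^ 1 + (-4) * J ^ 1 * a s ^ 1 * α s ^ 1 * H s ^ 1 + (6) * J ^ 1 * a s ^ 2 * H s ^ 1 + (8) * J ^ 2 * α s ^ 1 * H s ^ 1 + (-8) * J ^ 2 * a s ^ 1 * H s ^ 1 + (2) * b s ^ 2 * α s ^ 1 * H s ^ 1 + (-1) * a s ^ 1 * b s ^ 2 * H s ^ 1 + (-2) * J ^ 1 * b s ^ 2 * H s ^ 1 + (2) * a s ^ 1 * α s ^ 1 + (-2) * a s ^ 2 + (-2) * J ^ 1 * α s ^ 1 + (2) * J ^ 1 * a s ^ 1 + (2) * b s ^ 2) =ᶠ[nhds t] (fun _ => (0:ℝ)) := by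
        filter_upwards [hIopen.mem_nhds ht] with s hs
        have hp := hP1 s hs
        simp only [P1] at hp
        linear_combination hp
      exact (hasDerivAt_const t (0:ℝ)).congr_of_eventuallyEq hev
    have hz := hF.unique h0
    have hne := (hpos t ht).ne'
    have hmul : h t * ((-3) * a t ^ 1 * α t ^ 3 * H t ^ 1 + (-3) * a t ^ 2 * α t ^ 2 * H t ^ 1 + (1) * a t ^ 3 * α t ^ 1 * H t ^ 1 + (5) * a t ^ 4 * H t ^ 1 + (6) * J ^ 1 * α t ^ 3 * H t ^ 1 + (28) * J ^ 1 * a t ^ 1 * α t ^ 2 * H t ^ 1 + (6) * J ^ 1 * a t ^ 2 * α t ^ 1 * H t ^ 1 + (-40) * J ^ 1 * a t ^ 3 * H t ^ 1 + (-44) * J ^ 2 * α t ^ 2 * H t ^ 1 + (-64) * J ^ 2 * a t ^ 1 * α t ^ 1 * H t ^ 1 + (108) * J ^ 2 * a t ^ 2 * H t ^ 1 + (96) * J ^ 3 * α t ^ 1 * H t ^ 1 + (-96) * J ^ 3 * a t ^ 1 * H t ^ 1 + (-3) * b t ^ 2 * α t ^ 2 * H t ^ 1 + (-11) * a t ^ 1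 * b t ^ 2 * α t ^ 1 * H t ^ 1 + (4) * a t ^ 2 * b t ^ 2 * H t ^ 1 + (30) * J ^ 1 * b t ^ 2 * α t ^ 1 * H t ^ 1 + (8) * J ^ 1 * a t ^ 1 * b t ^ 2 * H t ^ 1 + (-36) * J ^ 2 * b t ^ 2 * H t ^ 1 + (-1) * b t ^ 4 * H t ^ 1 + (-4) * a t ^ 1 * α t ^ 2 + (-6) * a t ^ 2 * α t ^ 1 + (10) * a t ^ 3 + (4) * J ^ 1 * α t ^ 2 + (30) * J ^ 1 * a t ^ 1 * α t ^ 1 + (-34) * J ^ 1 * a t ^ 2 + (-24) * J ^ 2 * α t ^ 1 + (24) * J ^ 2 * a t ^ 1 + (2) * b t ^ 2 * α t ^ 1 + (-22) * a t ^ 1 * b t ^ 2 + (30) * J ^ 1 * b t ^ 2) = 0 := by simp only [Pi.mul_apply, Pi.pow_apply] at hz; linear_combination hz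
    rcases mul_eq_zero.mp hmul with h' | h'
    · exact absurd h' hne
    · exact h'
  -- Step 2: D1 := (1/h)·(d/dt) E1 vanishes on I
  have hD1 : ∀ t ∈ I, (15) * a t ^ 1 * α t ^ 4 * H t ^ 1 + (27) * a t ^ 2 * α t ^ 3 * H t ^ 1 + (15) * a t ^ 3 * α t ^ 2 * H t ^ 1 + (-17) * a t ^ 4 * α t ^ 1 * H t ^ 1 + (-40) * a t ^ 5 * H t ^ 1 + (-30) * J ^ 1 * α t ^ 4 * H t ^ 1 + (-210) * J ^ 1 * a t ^ 1 * α t ^ 3 * H t ^ 1 + (-234) * J ^ 1 * a t ^ 2 * α t ^ 2 * H t ^ 1 + (70) * J ^ 1 * a t ^ 3 * α t ^ 1 * H t ^ 1 + (404) * J ^ 1 * a t ^ 4 * H t ^ 1 + (312) * J ^ 2 * α t ^ 3 * H t ^ 1 + (1012) * J ^ 2 * a t ^ 1 * α t ^ 2 * H t ^ 1 + (240) * J ^ 2 * a t ^ 2 * α t ^ 1 * H t ^ 1 + (-1564) * J ^ 2 * a t ^ 3 * H t ^ 1 + (-1208) * J ^ 3 * α t ^ 2 * H t ^ 1 + (-1536)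 * J ^ 3 * a t ^ 1 * α t ^ 1 * H t ^ 1 + (2744) * J ^ 3 * a t ^ 2 * H t ^ 1 + (1824) * J ^ 4 * α t ^ 1 * H t ^ 1 + (-1824) * J ^ 4 * a t ^ 1 * H t ^ 1 + (9) * b t ^ 2 * α t ^ 3 * H t ^ 1 + (51) * a t ^ 1 * b t ^ 2 * α t ^ 2 * H t ^ 1 + (94) * a t ^ 2 * b t ^ 2 * α t ^ 1 * H t ^ 1 + (-20) * a t ^ 3 * b t ^ 2 * H t ^ 1 + (-138) * J ^ 1 * b t ^ 2 * α t ^ 2 * H t ^ 1 + (-514) * J ^ 1 * a t ^ 1 * b t ^ 2 * α t ^ 1 * H t ^ 1 + (-92) * J ^ 1 * a t ^ 2 * b t ^ 2 * H t ^ 1 + (696) * J ^ 2 * b t ^ 2 * α t ^ 1 * H t ^ 1 + (676) * J ^ 2 * a t ^ 1 * b t ^ 2 * H t ^ 1 + (-840) * J ^ 3 * b t ^ 2 * H t ^ 1 + (-9) * b t ^ 4 * α t ^ 1 * H t ^ 1 + (14) * a t ^ 1 * α t ^ 3 + (20) * a t ^ 1 * b t ^ 4 * H t ^ 1 + (46)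 * a t ^ 2 * α t ^ 2 + (20) * a t ^ 3 * α t ^ 1 + (-80) * a t ^ 4 + (-12) * J ^ 1 * α t ^ 3 + (-16) * J ^ 1 * b t ^ 4 * H t ^ 1 + (-202) * J ^ 1 * a t ^ 1 * α t ^ 2 + (-246) * J ^ 1 * a t ^ 2 * α t ^ 1 + (460) * J ^ 1 * a t ^ 3 + (148) * J ^ 2 * α t ^ 2 + (692) * J ^ 2 * a t ^ 1 * α t ^ 1 + (-840) * J ^ 2 * a t ^ 2 + (-456) * J ^ 3 * α t ^ 1 + (456) * J ^ 3 * a t ^ 1 + (-18) * b t ^ 2 * α t ^ 2 + (12) * a t ^ 1 * b t ^ 2 * α t ^ 1 + (280) * a t ^ 2 * b t ^ 2 + (38) * J ^ 1 * b t ^ 2 * α t ^ 1 + (-900) * J ^ 1 * a t ^ 1 * b t ^ 2 + (672) * J ^ 2 * b t ^ 2 + (-24) * b t ^ 4 = 0 := by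
    intro t ht
    have ha := hda t ht
    have hb := hdb t ht
    have hα := hdα t ht
    have hH := hdH t ht
    have hF : HasDerivAt (fun s => (-3) * a s ^ 1 * α s ^ 3 * H s ^ 1 + (-3) * a s ^ 2 * α s ^ 2 * H s ^ 1 + (1) * a s ^ 3 * α s ^ 1 * H s ^ 1 + (5) * a s ^ 4 * H s ^ 1 + (6) * J ^ 1 * α s ^ 3 * H s ^ 1 + (28) * J ^ 1 * a s ^ 1 * α s ^ 2 * H s ^ 1 + (6) * J ^ 1 * a s ^ 2 * α s ^ 1 * H s ^ 1 + (-40) * J ^ 1 * a s ^ 3 * H s ^ 1 + (-44) * J ^ 2 * α s ^ 2 * H s ^ 1 + (-64) * J ^ 2 * a s ^ 1 * α s ^ 1 * H s ^ 1 + (108) * J ^ 2 * a s ^ 2 * H s ^ 1 + (96) * J ^ 3 * α s ^ 1 * H s ^ 1 + (-96) * J ^ 3 * a s ^ 1 * H s ^ 1 + (-3) * b s ^ 2 * α s ^ 2 * H s ^ 1 + (-11) * a s ^ 1 * b s ^ 2 * α s ^ 1 * H s ^ 1 + (4) * a s ^ 2 * b s ^ 2 * H s ^ 1 + (30) * J ^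 1 * b s ^ 2 * α s ^ 1 * H s ^ 1 + (8) * J ^ 1 * a s ^ 1 * b s ^ 2 * H s ^ 1 + (-36) * J ^ 2 * b s ^ 2 * H s ^ 1 + (-1) * b s ^ 4 * H s ^ 1 + (-4) * a s ^ 1 * α s ^ 2 + (-6) * a s ^ 2 * α s ^ 1 + (10) * a s ^ 3 + (4) * J ^ 1 * α s ^ 2 + (30) * J ^ 1 * a s ^ 1 * α s ^ 1 + (-34) * J ^ 1 * a s ^ 2 + (-24) * J ^ 2 * α s ^ 1 + (24) * J ^ 2 * a s ^ 1 + (2) * b s ^ 2 * α s ^ 1 + (-22) * a s ^ 1 * b s ^ 2 + (30) * J ^ 1 * b s ^ 2) _ t := ((((((((((((((((((((((((((((((((((hasDerivAt_const t ((-3))).mul (ha.pow 1)).mul (hα.pow 3)).mul (hH.pow 1)).add ((((hasDerivAt_const t ((-3))).mul (ha.pow 2)).mul (hα.pow 2)).mul (hH.pow 1))).add ((((hasDerivAt_const t ((1))).mul (ha.pow 3)).mul (hα.pow 1)).mul (hH.pow 1))).add (((hasDerivAt_const t ((5))).mul (ha.pow 4)).mul (hH.pow 1))).add (((hasDerivAt_const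 t ((6) * J ^ 1)).mul (hα.pow 3)).mul (hH.pow 1))).add ((((hasDerivAt_const t ((28) * J ^ 1)).mul (ha.pow 1)).mul (hα.pow 2)).mul (hH.pow 1))).add ((((hasDerivAt_const t ((6) * J ^ 1)).mul (ha.pow 2)).mul (hα.pow 1)).mul (hH.pow 1))).add (((hasDerivAt_const t ((-40) * J ^ 1)).mul (ha.pow 3)).mul (hH.pow 1))).add (((hasDerivAt_const t ((-44) * J ^ 2)).mul (hα.pow 2)).mul (hH.pow 1))).add ((((hasDerivAt_const t ((-64) * J ^ 2)).mul (ha.pow 1)).mul (hα.pow 1)).mul (hH.pow 1))).add (((hasDerivAt_const t ((108) * J ^ 2)).mul (ha.pow 2)).mul (hH.pow 1))).add (((hasDerivAt_const t ((96) * J ^ 3)).mul (hα.pow 1)).mul (hH.pow 1))).add (((hasDerivAt_const t ((-96) * J ^ 3)).mul (ha.pow 1)).mul (hH.pow 1))).add ((((hasDerivAt_const t ((-3))).mul (hb.pow 2)).mul (hα.pow 2)).mul (hH.pow 1))).add (((((hasDerivAt_const t ((-11))).mul (ha.pow 1)).mul (hb.pow 2)).mul (hα.pow 1)).mul (hH.pow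 1))).add ((((hasDerivAt_const t ((4))).mul (ha.pow 2)).mul (hb.pow 2)).mul (hH.pow 1))).add ((((hasDerivAt_const t ((30) * J ^ 1)).mul (hb.pow 2)).mul (hα.pow 1)).mul (hH.pow 1))).add ((((hasDerivAt_const t ((8) * J ^ 1)).mul (ha.pow 1)).mul (hb.pow 2)).mul (hH.pow 1))).add (((hasDerivAt_const t ((-36) * J ^ 2)).mul (hb.pow 2)).mul (hH.pow 1))).add (((hasDerivAt_const t ((-1))).mul (hb.pow 4)).mul (hH.pow 1))).add (((hasDerivAt_const t ((-4))).mul (ha.pow 1)).mul (hα.pow 2))).add (((hasDerivAt_const t ((-6))).mul (ha.pow 2)).mul (hα.pow 1))).add ((hasDerivAt_const t ((10))).mul (ha.pow 3))).add ((hasDerivAt_const t ((4) * J ^ 1)).mul (hα.pow 2))).add (((hasDerivAt_const t ((30) * J ^ 1)).mul (ha.pow 1)).mul (hα.pow 1))).add ((hasDerivAt_const t ((-34) * J ^ 1)).mul (ha.pow 2))).add ((hasDerivAt_const t ((-24) * J ^ 2)).mul (hα.pow 1))).add ((hasDerivAt_const t ((24) * J ^ 2)).mul (ha.pow 1))).add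 (((hasDerivAt_const t ((2))).mul (hb.pow 2)).mul (hα.pow 1))).add (((hasDerivAt_const t ((-22))).mul (ha.pow 1)).mul (hb.pow 2))).add ((hasDerivAt_const t ((30) * J ^ 1)).mul (hb.pow 2)))
    have h0 : HasDerivAt (fun s => (-3) * a s ^ 1 * α s ^ 3 * H s ^ 1 + (-3) * a s ^ 2 * α s ^ 2 * H s ^ 1 + (1) * a s ^ 3 * α s ^ 1 * H s ^ 1 + (5) * a s ^ 4 * H s ^ 1 + (6) * J ^ 1 * α s ^ 3 * H s ^ 1 + (28) * J ^ 1 * a s ^ 1 * α s ^ 2 * H s ^ 1 + (6) * J ^ 1 * a s ^ 2 * α s ^ 1 * H s ^ 1 + (-40) * J ^ 1 * a s ^ 3 * H s ^ 1 + (-44) * J ^ 2 * α s ^ 2 * H s ^ 1 + (-64) * J ^ 2 * a s ^ 1 * α s ^ 1 * H s ^ 1 + (108) * J ^ 2 * a s ^ 2 * H s ^ 1 + (96) * J ^ 3 * α s ^ 1 * H s ^ 1 + (-96) * J ^ 3 * a s ^ 1 * H s ^ 1 + (-3) * b s ^ 2 * α s ^ 2 * H s ^ 1 + (-11) * a s ^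 1 * b s ^ 2 * α s ^ 1 * H s ^ 1 + (4) * a s ^ 2 * b s ^ 2 * H s ^ 1 + (30) * J ^ 1 * b s ^ 2 * α s ^ 1 * H s ^ 1 + (8) * J ^ 1 * a s ^ 1 * b s ^ 2 * H s ^ 1 + (-36) * J ^ 2 * b s ^ 2 * H s ^ 1 + (-1) * b s ^ 4 * H s ^ 1 + (-4) * a s ^ 1 * α s ^ 2 + (-6) * a s ^ 2 * α s ^ 1 + (10) * a s ^ 3 + (4) * J ^ 1 * α s ^ 2 + (30) * J ^ 1 * a s ^ 1 * α s ^ 1 + (-34) * J ^ 1 * a s ^ 2 + (-24) * J ^ 2 * α s ^ 1 + (24) * J ^ 2 * a s ^ 1 + (2) * b s ^ 2 * α s ^ 1 + (-22) * a s ^ 1 * b s ^ 2 + (30) * J ^ 1 * b s ^ 2) 0 t := by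
      have hev : (fun s => (-3) * a s ^ 1 * α s ^ 3 * H s ^ 1 + (-3) * a s ^ 2 * α s ^ 2 * H s ^ 1 + (1) * a s ^ 3 * α s ^ 1 * H s ^ 1 + (5) * a s ^ 4 * H s ^ 1 + (6) * J ^ 1 * α s ^ 3 * H s ^ 1 + (28) * J ^ 1 * a s ^ 1 * α s ^ 2 * H s ^ 1 + (6) * J ^ 1 * a s ^ 2 * α s ^ 1 * H s ^ 1 + (-40) * J ^ 1 * a s ^ 3 * H s ^ 1 + (-44) * J ^ 2 * α s ^ 2 * H s ^ 1 + (-64) * J ^ 2 * a s ^ 1 * α s ^ 1 * H s ^ 1 + (108) * J ^ 2 * a s ^ 2 * H s ^ 1 + (96) * J ^ 3 * α s ^ 1 * H s ^ 1 + (-96) * J ^ 3 * a s ^ 1 * H s ^ 1 + (-3) * b s ^ 2 * α s ^ 2 * H s ^ 1 + (-11) * a s ^ 1 * b s ^ 2 * α s ^ 1 * H s ^ 1 + (4) * a s ^ 2 * b s ^ 2 * H s ^ 1 + (30) * J ^ 1 * b s ^ 2 * α s ^ 1 * H s ^ 1 + (8) * J ^ 1 * a s ^ 1 * b s ^ 2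 * H s ^ 1 + (-36) * J ^ 2 * b s ^ 2 * H s ^ 1 + (-1) * b s ^ 4 * H s ^ 1 + (-4) * a s ^ 1 * α s ^ 2 + (-6) * a s ^ 2 * α s ^ 1 + (10) * a s ^ 3 + (4) * J ^ 1 * α s ^ 2 + (30) * J ^ 1 * a s ^ 1 * α s ^ 1 + (-34) * J ^ 1 * a s ^ 2 + (-24) * J ^ 2 * α s ^ 1 + (24) * J ^ 2 * a s ^ 1 + (2) * b s ^ 2 * α s ^ 1 + (-22) * a s ^ 1 * b s ^ 2 + (30) * J ^ 1 * b s ^ 2) =ᶠ[nhds t] (fun _ => (0:ℝ)) := by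
        filter_upwards [hIopen.mem_nhds ht] with s hs
        exact hE1 s hs
      exact (hasDerivAt_const t (0:ℝ)).congr_of_eventuallyEq hev
    have hz := hF.unique h0
    have hne := (hpos t ht).ne'
    have hmul : h t * ((15) * a t ^ 1 * α t ^ 4 * H t ^ 1 + (27) * a t ^ 2 * α t ^ 3 * H t ^ 1 + (15) * a t ^ 3 * α t ^ 2 * H t ^ 1 + (-17) * a t ^ 4 * α t ^ 1 * H t ^ 1 + (-40) * a t ^ 5 * H t ^ 1 + (-30) * J ^ 1 * α t ^ 4 * H t ^ 1 + (-210) * J ^ 1 * a t ^ 1 * α t ^ 3 * H t ^ 1 + (-234) * J ^ 1 * a t ^ 2 * α t ^ 2 * H t ^ 1 + (70) * J ^ 1 * a t ^ 3 * α t ^ 1 * H t ^ 1 + (404) * J ^ 1 * a t ^ 4 * H t ^ 1 + (312) * J ^ 2 * α t ^ 3 * H t ^ 1 + (1012) * J ^ 2 * a t ^ 1 * α t ^ 2 * H t ^ 1 + (240) * J ^ 2 * a t ^ 2 * α t ^ 1 * H t ^ 1 + (-1564) * J ^ 2 * a t ^ 3 * H t ^ 1 + (-1208) * J ^ 3 *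 α t ^ 2 * H t ^ 1 + (-1536) * J ^ 3 * a t ^ 1 * α t ^ 1 * H t ^ 1 + (2744) * J ^ 3 * a t ^ 2 * H t ^ 1 + (1824) * J ^ 4 * α t ^ 1 * H t ^ 1 + (-1824) * J ^ 4 * a t ^ 1 * H t ^ 1 + (9) * b t ^ 2 * α t ^ 3 * H t ^ 1 + (51) * a t ^ 1 * b t ^ 2 * α t ^ 2 * H t ^ 1 + (94) * a t ^ 2 * b t ^ 2 * α t ^ 1 * H t ^ 1 + (-20) * a t ^ 3 * b t ^ 2 * H t ^ 1 + (-138) * J ^ 1 * b t ^ 2 * α t ^ 2 * H t ^ 1 + (-514) * J ^ 1 * a t ^ 1 * b t ^ 2 * α t ^ 1 * H t ^ 1 + (-92) * J ^ 1 * a t ^ 2 * b t ^ 2 * H t ^ 1 + (696) * J ^ 2 * b t ^ 2 * α t ^ 1 * H t ^ 1 + (676) * J ^ 2 * a t ^ 1 * b t ^ 2 * H t ^ 1 + (-840) * J ^ 3 * b t ^ 2 * H t ^ 1 + (-9) * b t ^ 4 * α t ^ 1 * H t ^ 1 + (14) * a t ^ 1 * α t ^ 3 + (20) * a t ^ 1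 * b t ^ 4 * H t ^ 1 + (46) * a t ^ 2 * α t ^ 2 + (20) * a t ^ 3 * α t ^ 1 + (-80) * a t ^ 4 + (-12) * J ^ 1 * α t ^ 3 + (-16) * J ^ 1 * b t ^ 4 * H t ^ 1 + (-202) * J ^ 1 * a t ^ 1 * α t ^ 2 + (-246) * J ^ 1 * a t ^ 2 * α t ^ 1 + (460) * J ^ 1 * a t ^ 3 + (148) * J ^ 2 * α t ^ 2 + (692) * J ^ 2 * a t ^ 1 * α t ^ 1 + (-840) * J ^ 2 * a t ^ 2 + (-456) * J ^ 3 * α t ^ 1 + (456) * J ^ 3 * a t ^ 1 + (-18) * b t ^ 2 * α t ^ 2 + (12) * a t ^ 1 * b t ^ 2 * α t ^ 1 + (280) * a t ^ 2 * b t ^ 2 + (38) * J ^ 1 * b t ^ 2 * α t ^ 1 + (-900) * J ^ 1 * a t ^ 1 * b t ^ 2 + (672) * J ^ 2 * b t ^ 2 + (-24) * b t ^ 4) = 0 := by simp only [Pi.mul_apply, Pi.pow_apply] at hz; linear_combination hz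
    rcases mul_eq_zero.mp hmul with h' | h'
    · exact absurd h' hne
    · exact h'
  -- Step 3: combine
  intro t ht
  have h1 := hP1 t ht
  have h2 := hP2 t ht
  have h3 := hE1 t ht
  have h4 := hD1 t ht
  simp only [P1, P2] at h1 h2
  have hG : 16 * b t ^ 8 + 8 * b t ^ 6 * α t ^ 2 + b t ^ 4 * α t ^ 4 = 0 := by
    linear_combination (((3 : ℝ)/320) * a t ^ 1 * α t ^ 6 * H t ^ 1 + ((17 : ℝ)/320) * a t ^ 2 * α t ^ 5 * H t ^ 1 + ((11 : ℝ)/128) * a t ^ 3 * α t ^ 4 * H t ^ 1 + ((-9 : ℝ)/64) * J ^ 1 * a t ^ 1 * α t ^ 5 * H t ^ 1 + ((-1 : ℝ)/2) * J ^ 1 * a t ^ 2 * α t ^ 4 * H t ^ 1 + ((-11 : ℝ)/64) * J ^ 1 * a t ^ 3 * α t ^ 3 * H t ^ 1 + ((45 : ℝ)/64) * J ^ 2 * a t ^ 1 * α t ^ 4 * H t ^ 1 + ((269 : ℝ)/320) * J ^ 2 * a t ^ 2 * α t ^ 3 * H t ^ 1 + ((11 : ℝ)/128) * J ^ 2 *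 a t ^ 3 * α t ^ 2 * H t ^ 1 + ((-327 : ℝ)/320) * J ^ 3 * a t ^ 1 * α t ^ 3 * H t ^ 1 + ((-63 : ℝ)/160) * J ^ 3 * a t ^ 2 * α t ^ 2 * H t ^ 1 + ((9 : ℝ)/20) * J ^ 4 * a t ^ 1 * α t ^ 2 * H t ^ 1 + ((1 : ℝ)/5) * b t ^ 2 * α t ^ 5 * H t ^ 1 + ((2173 : ℝ)/1920) * a t ^ 1 * b t ^ 2 * α t ^ 4 * H t ^ 1 + ((141 : ℝ)/80) * a t ^ 2 * b t ^ 2 * α t ^ 3 * H t ^ 1 + ((-11 : ℝ)/96) * a t ^ 3 * b t ^ 2 * α t ^ 2 * H t ^ 1 + ((-233 : ℝ)/80) * J ^ 1 * b t ^ 2 * α t ^ 4 * H t ^ 1 + ((-1873 : ℝ)/192) * J ^ 1 * a t ^ 1 * b t ^ 2 * α t ^ 3 * H t ^ 1 + ((-25 : ℝ)/32) * J ^ 1 * a t ^ 2 * b t ^ 2 * α t ^ 2 * H t ^ 1 + ((121 : ℝ)/48) * J ^ 1 * a t ^ 3 * b t ^ 2 * α t ^ 1 * H t ^ 1 + ((551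 : ℝ)/40) * J ^ 2 * b t ^ 2 * α t ^ 3 * H t ^ 1 + ((6143 : ℝ)/640) * J ^ 2 * a t ^ 1 * b t ^ 2 * α t ^ 2 * H t ^ 1 + ((-1683 : ℝ)/160) * J ^ 2 * a t ^ 2 * b t ^ 2 * α t ^ 1 * H t ^ 1 + ((-1317 : ℝ)/80) * J ^ 3 * b t ^ 2 * α t ^ 2 * H t ^ 1 + ((339 : ℝ)/40) * J ^ 3 * a t ^ 1 * b t ^ 2 * α t ^ 1 * H t ^ 1 + ((27 : ℝ)/5) * J ^ 4 * b t ^ 2 * α t ^ 1 * H t ^ 1 + ((-17 : ℝ)/30) * b t ^ 4 * α t ^ 3 * H t ^ 1 + ((-69 : ℝ)/640) * a t ^ 1 * α t ^ 5 + ((-2183 : ℝ)/480) * a t ^ 1 * b t ^ 4 * α t ^ 2 * H t ^ 1 + ((-383 : ℝ)/960) * a t ^ 2 * α t ^ 4 + ((-22 : ℝ)/3) * a t ^ 2 * b t ^ 4 * α t ^ 1 * H t ^ 1 + ((1 : ℝ)/15) * a t ^ 3 * α t ^ 3 + ((5 : ℝ)/12) * a t ^ 4 * α t ^ 2 + ((6401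 : ℝ)/480) * J ^ 1 * b t ^ 4 * α t ^ 2 * H t ^ 1 + ((509 : ℝ)/384) * J ^ 1 * a t ^ 1 * α t ^ 4 + ((12629 : ℝ)/240) * J ^ 1 * a t ^ 1 * b t ^ 4 * α t ^ 1 * H t ^ 1 + ((791 : ℝ)/480) * J ^ 1 * a t ^ 2 * α t ^ 3 + ((121 : ℝ)/4) * J ^ 1 * a t ^ 2 * b t ^ 4 * H t ^ 1 + ((-151 : ℝ)/80) * J ^ 1 * a t ^ 3 * α t ^ 2 + ((-12987 : ℝ)/160) * J ^ 2 * b t ^ 4 * α t ^ 1 * H t ^ 1 + ((-2691 : ℝ)/640) * J ^ 2 * a t ^ 1 * α t ^ 3 + ((-693 : ℝ)/5) * J ^ 2 * a t ^ 1 * b t ^ 4 * H t ^ 1 + ((303 : ℝ)/320) * J ^ 2 * a t ^ 2 * α t ^ 2 + ((792 : ℝ)/5) * J ^ 3 * b t ^ 4 * H t ^ 1 + ((1629 : ℝ)/640) * J ^ 3 * a t ^ 1 * α t ^ 2 + ((-31 : ℝ)/15) * b t ^ 2 * α t ^ 4 + ((-14 : ℝ)/15) * b t ^ 6 * α t ^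 1 * H t ^ 1 + ((-1497 : ℝ)/160) * a t ^ 1 * b t ^ 2 * α t ^ 3 + ((-1811 : ℝ)/240) * a t ^ 2 * b t ^ 2 * α t ^ 2 + ((-13 : ℝ)/3) * a t ^ 3 * b t ^ 2 * α t ^ 1 + ((11933 : ℝ)/480) * J ^ 1 * b t ^ 2 * α t ^ 3 + ((77 : ℝ)/20) * J ^ 1 * b t ^ 6 * H t ^ 1 + ((4693 : ℝ)/96) * J ^ 1 * a t ^ 1 * b t ^ 2 * α t ^ 2 + ((1871 : ℝ)/120) * J ^ 1 * a t ^ 2 * b t ^ 2 * α t ^ 1 + ((-5937 : ℝ)/80) * J ^ 2 * b t ^ 2 * α t ^ 2 + ((-219 : ℝ)/8) * J ^ 2 * a t ^ 1 * b t ^ 2 * α t ^ 1 + ((4887 : ℝ)/160) * J ^ 3 * b t ^ 2 * α t ^ 1 + ((-127 : ℝ)/12) * b t ^ 4 * α t ^ 2 + ((-263 : ℝ)/5) * a t ^ 1 * b t ^ 4 * α t ^ 1 + (-112) * a t ^ 2 * b t ^ 4 + ((1109 : ℝ)/10) * J ^ 1 * b t ^ 4 * α t ^ 1 + ((4589 :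 ℝ)/10) * J ^ 1 * a t ^ 1 * b t ^ 4 + ((-9297 : ℝ)/20) * J ^ 2 * b t ^ 4 + ((-92 : ℝ)/5) * b t ^ 6) * h1 + (((7 : ℝ)/640) * a t ^ 2 * α t ^ 6 * H t ^ 1 + ((-3 : ℝ)/160) * a t ^ 3 * α t ^ 5 * H t ^ 1 + ((1 : ℝ)/128) * a t ^ 4 * α t ^ 4 * H t ^ 1 + ((-7 : ℝ)/320) * J ^ 1 * a t ^ 1 * α t ^ 6 * H t ^ 1 + ((3 : ℝ)/320) * J ^ 1 * a t ^ 2 * α t ^ 5 * H t ^ 1 + ((9 : ℝ)/320) * J ^ 1 * a t ^ 3 * α t ^ 4 * H t ^ 1 + ((-1 : ℝ)/64) * J ^ 1 * a t ^ 4 * α t ^ 3 * H t ^ 1 + ((9 : ℝ)/160) * J ^ 2 * a t ^ 1 * α t ^ 5 * H t ^ 1 + ((-41 : ℝ)/640) * J ^ 2 * a t ^ 2 * α t ^ 4 * H t ^ 1 + ((1 : ℝ)/128) * J ^ 2 * a t ^ 4 * α t ^ 2 * H t ^ 1 + ((-3 : ℝ)/64) * J ^ 3 * a t ^ 1 * α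 t ^ 4 * H t ^ 1 + ((9 : ℝ)/160) * J ^ 3 * a t ^ 2 * α t ^ 3 * H t ^ 1 + ((-3 : ℝ)/320) * J ^ 3 * a t ^ 3 * α t ^ 2 * H t ^ 1 + ((1 : ℝ)/80) * J ^ 4 * a t ^ 1 * α t ^ 3 * H t ^ 1 + ((-1 : ℝ)/80) * J ^ 4 * a t ^ 2 * α t ^ 2 * H t ^ 1 + ((227 : ℝ)/960) * a t ^ 1 * b t ^ 2 * α t ^ 5 * H t ^ 1 + ((-781 : ℝ)/1920) * a t ^ 2 * b t ^ 2 * α t ^ 4 * H t ^ 1 + ((23 : ℝ)/120) * a t ^ 3 * b t ^ 2 * α t ^ 3 * H t ^ 1 + ((-1 : ℝ)/96) * a t ^ 4 * b t ^ 2 * α t ^ 2 * H t ^ 1 + ((-7 : ℝ)/15) * J ^ 1 * b t ^ 2 * α t ^ 5 * H t ^ 1 + ((97 : ℝ)/320) * J ^ 1 * a t ^ 1 * b t ^ 2 * α t ^ 4 * H t ^ 1 + ((661 : ℝ)/960) * J ^ 1 * a t ^ 2 * b t ^ 2 * α t ^ 3 * H t ^ 1 + ((-383 : ℝ)/480) *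 J ^ 1 * a t ^ 3 * b t ^ 2 * α t ^ 2 * H t ^ 1 + ((11 : ℝ)/48) * J ^ 1 * a t ^ 4 * b t ^ 2 * α t ^ 1 * H t ^ 1 + ((239 : ℝ)/240) * J ^ 2 * b t ^ 2 * α t ^ 4 * H t ^ 1 + ((-1717 : ℝ)/960) * J ^ 2 * a t ^ 1 * b t ^ 2 * α t ^ 3 * H t ^ 1 + ((395 : ℝ)/384) * J ^ 2 * a t ^ 2 * b t ^ 2 * α t ^ 2 * H t ^ 1 + ((-29 : ℝ)/160) * J ^ 2 * a t ^ 3 * b t ^ 2 * α t ^ 1 * H t ^ 1 + ((-163 : ℝ)/240) * J ^ 3 * b t ^ 2 * α t ^ 3 * H t ^ 1 + ((1091 : ℝ)/960) * J ^ 3 * a t ^ 1 * b t ^ 2 * α t ^ 2 * H t ^ 1 + ((-23 : ℝ)/48) * J ^ 3 * a t ^ 2 * b t ^ 2 * α t ^ 1 * H t ^ 1 + ((3 : ℝ)/20) * J ^ 4 * b t ^ 2 * α t ^ 2 * H t ^ 1 + ((-3 : ℝ)/20) * J ^ 4 * a t ^ 1 * b t ^ 2 * α t ^ 1 * H t ^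 1 + ((1 : ℝ)/15) * b t ^ 4 * α t ^ 4 * H t ^ 1 + ((-37 : ℝ)/48) * a t ^ 1 * b t ^ 4 * α t ^ 3 * H t ^ 1 + ((-17 : ℝ)/960) * a t ^ 2 * α t ^ 5 + ((763 : ℝ)/480) * a t ^ 2 * b t ^ 4 * α t ^ 2 * H t ^ 1 + ((49 : ℝ)/960) * a t ^ 3 * α t ^ 4 + ((-2 : ℝ)/3) * a t ^ 3 * b t ^ 4 * α t ^ 1 * H t ^ 1 + ((-1 : ℝ)/30) * a t ^ 4 * α t ^ 3 + ((311 : ℝ)/240) * J ^ 1 * b t ^ 4 * α t ^ 3 * H t ^ 1 + ((49 : ℝ)/960) * J ^ 1 * a t ^ 1 * α t ^ 5 + ((167 : ℝ)/160) * J ^ 1 * a t ^ 1 * b t ^ 4 * α t ^ 2 * H t ^ 1 + ((-17 : ℝ)/192) * J ^ 1 * a t ^ 2 * α t ^ 4 + ((-1337 : ℝ)/240) * J ^ 1 * a t ^ 2 * b t ^ 4 * α t ^ 1 * H t ^ 1 + ((-7 : ℝ)/240) * J ^ 1 * a t ^ 3 * α t ^ 3 + ((11 : ℝ)/4) * J ^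 1 * a t ^ 3 * b t ^ 4 * H t ^ 1 + ((1 : ℝ)/15) * J ^ 1 * a t ^ 4 * α t ^ 2 + (-8) * J ^ 2 * b t ^ 4 * α t ^ 2 * H t ^ 1 + ((-29 : ℝ)/240) * J ^ 2 * a t ^ 1 * α t ^ 4 + ((1843 : ℝ)/160) * J ^ 2 * a t ^ 1 * b t ^ 4 * α t ^ 1 * H t ^ 1 + ((241 : ℝ)/960) * J ^ 2 * a t ^ 2 * α t ^ 3 + ((-33 : ℝ)/10) * J ^ 2 * a t ^ 2 * b t ^ 4 * H t ^ 1 + ((-25 : ℝ)/192) * J ^ 2 * a t ^ 3 * α t ^ 2 + ((331 : ℝ)/80) * J ^ 3 * b t ^ 4 * α t ^ 1 * H t ^ 1 + ((17 : ℝ)/320) * J ^ 3 * a t ^ 1 * α t ^ 3 + ((-22 : ℝ)/5) * J ^ 3 * a t ^ 1 * b t ^ 4 * H t ^ 1 + ((-17 : ℝ)/320) * J ^ 3 * a t ^ 2 * α t ^ 2 + ((-4 : ℝ)/15) * b t ^ 6 * α t ^ 2 * H t ^ 1 + ((-29 : ℝ)/192) * a t ^ 1 * b t ^ 2 * α t ^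 4 + ((-2 : ℝ)/3) * a t ^ 1 * b t ^ 6 * α t ^ 1 * H t ^ 1 + ((-39 : ℝ)/80) * a t ^ 2 * b t ^ 2 * α t ^ 3 + ((397 : ℝ)/240) * a t ^ 3 * b t ^ 2 * α t ^ 2 + (-1) * a t ^ 4 * b t ^ 2 * α t ^ 1 + ((14 : ℝ)/15) * J ^ 1 * b t ^ 2 * α t ^ 4 + ((89 : ℝ)/30) * J ^ 1 * b t ^ 6 * α t ^ 1 * H t ^ 1 + ((-23 : ℝ)/60) * J ^ 1 * a t ^ 1 * b t ^ 2 * α t ^ 3 + ((11 : ℝ)/4) * J ^ 1 * a t ^ 1 * b t ^ 6 * H t ^ 1 + ((-133 : ℝ)/60) * J ^ 1 * a t ^ 2 * b t ^ 2 * α t ^ 2 + ((203 : ℝ)/120) * J ^ 1 * a t ^ 3 * b t ^ 2 * α t ^ 1 + ((-467 : ℝ)/240) * J ^ 2 * b t ^ 2 * α t ^ 3 + ((-77 : ℝ)/10) * J ^ 2 * b t ^ 6 * H t ^ 1 + ((2497 : ℝ)/960) * J ^ 2 * a t ^ 1 * b t ^ 2 * α t ^ 2 + ((-173 : ℝ)/240)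 * J ^ 2 * a t ^ 2 * b t ^ 2 * α t ^ 1 + ((51 : ℝ)/80) * J ^ 3 * b t ^ 2 * α t ^ 2 + ((-51 : ℝ)/80) * J ^ 3 * a t ^ 1 * b t ^ 2 * α t ^ 1 + ((58 : ℝ)/15) * b t ^ 4 * α t ^ 3 + ((-1551 : ℝ)/80) * a t ^ 1 * b t ^ 4 * α t ^ 2 + ((269 : ℝ)/10) * a t ^ 2 * b t ^ 4 * α t ^ 1 + (-12) * a t ^ 3 * b t ^ 4 + ((1241 : ℝ)/80) * J ^ 1 * b t ^ 4 * α t ^ 2 + ((-961 : ℝ)/40) * J ^ 1 * a t ^ 1 * b t ^ 4 * α t ^ 1 + ((107 : ℝ)/10) * J ^ 1 * a t ^ 2 * b t ^ 4 + ((-871 : ℝ)/80) * J ^ 2 * b t ^ 4 * α t ^ 1 + ((101 : ℝ)/10) * J ^ 2 * a t ^ 1 * b t ^ 4 + ((133 : ℝ)/30) * b t ^ 6 * α t ^ 1 + (-12) * a t ^ 1 * b t ^ 6 + ((153 : ℝ)/10) * J ^ 1 * b t ^ 6) * h2 + (((7 : ℝ)/640) * a t ^ 1 * α t ^ 5 *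 H t ^ 1 + ((9 : ℝ)/320) * a t ^ 2 * α t ^ 4 * H t ^ 1 + ((-29 : ℝ)/320) * J ^ 1 * a t ^ 1 * α t ^ 4 * H t ^ 1 + ((-9 : ℝ)/160) * J ^ 1 * a t ^ 2 * α t ^ 3 * H t ^ 1 + ((19 : ℝ)/128) * J ^ 2 * a t ^ 1 * α t ^ 3 * H t ^ 1 + ((9 : ℝ)/320) * J ^ 2 * a t ^ 2 * α t ^ 2 * H t ^ 1 + ((-11 : ℝ)/160) * J ^ 3 * a t ^ 1 * α t ^ 2 * H t ^ 1 + ((7 : ℝ)/30) * b t ^ 2 * α t ^ 4 * H t ^ 1 + ((281 : ℝ)/480) * a t ^ 1 * b t ^ 2 * α t ^ 3 * H t ^ 1 + ((-3 : ℝ)/80) * a t ^ 2 * b t ^ 2 * α t ^ 2 * H t ^ 1 + ((-293 : ℝ)/160) * J ^ 1 * b t ^ 2 * α t ^ 3 * H t ^ 1 + ((-21 : ℝ)/40) * J ^ 1 * a t ^ 1 * b t ^ 2 * α t ^ 2 * H t ^ 1 + ((33 : ℝ)/40) * J ^ 1 * a t ^ 2 * b t ^ 2 * α t ^ 1 * H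 t ^ 1 + ((1163 : ℝ)/480) * J ^ 2 * b t ^ 2 * α t ^ 2 * H t ^ 1 + ((-403 : ℝ)/240) * J ^ 2 * a t ^ 1 * b t ^ 2 * α t ^ 1 * H t ^ 1 + ((-33 : ℝ)/40) * J ^ 3 * b t ^ 2 * α t ^ 1 * H t ^ 1 + ((-14 : ℝ)/15) * b t ^ 4 * α t ^ 2 * H t ^ 1 + ((-7 : ℝ)/60) * a t ^ 1 * α t ^ 4 + ((-12 : ℝ)/5) * a t ^ 1 * b t ^ 4 * α t ^ 1 * H t ^ 1 + ((-1 : ℝ)/10) * a t ^ 2 * α t ^ 3 + ((13 : ℝ)/60) * a t ^ 3 * α t ^ 2 + ((583 : ℝ)/60) * J ^ 1 * b t ^ 4 * α t ^ 1 * H t ^ 1 + ((329 : ℝ)/480) * J ^ 1 * a t ^ 1 * α t ^ 3 + ((99 : ℝ)/10) * J ^ 1 * a t ^ 1 * b t ^ 4 * H t ^ 1 + ((-97 : ℝ)/240) * J ^ 1 * a t ^ 2 * α t ^ 2 + ((-121 : ℝ)/5) * J ^ 2 * b t ^ 4 * H t ^ 1 + ((-73 : ℝ)/160) * J ^ 2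 * a t ^ 1 * α t ^ 2 + ((-133 : ℝ)/60) * b t ^ 2 * α t ^ 3 + ((-23 : ℝ)/6) * a t ^ 1 * b t ^ 2 * α t ^ 2 + ((-8 : ℝ)/15) * a t ^ 2 * b t ^ 2 * α t ^ 1 + ((749 : ℝ)/60) * J ^ 1 * b t ^ 2 * α t ^ 2 + ((59 : ℝ)/30) * J ^ 1 * a t ^ 1 * b t ^ 2 * α t ^ 1 + ((-219 : ℝ)/40) * J ^ 2 * b t ^ 2 * α t ^ 1 + ((-337 : ℝ)/30) * b t ^ 4 * α t ^ 1 + ((-188 : ℝ)/5) * a t ^ 1 * b t ^ 4 + ((409 : ℝ)/5) * J ^ 1 * b t ^ 4) * h3 + (((1 : ℝ)/640) * a t ^ 1 * α t ^ 4 * H t ^ 1 + ((-1 : ℝ)/320) * J ^ 1 * a t ^ 1 * α t ^ 3 * H t ^ 1 + ((1 : ℝ)/640) * J ^ 2 * a t ^ 1 * α t ^ 2 * H t ^ 1 + ((1 : ℝ)/30) * b t ^ 2 * α t ^ 3 * H t ^ 1 + ((-1 : ℝ)/480) * a t ^ 1 * b t ^ 2 * α t ^ 2 * H t ^ 1 +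 ((-5 : ℝ)/96) * J ^ 1 * b t ^ 2 * α t ^ 2 * H t ^ 1 + ((11 : ℝ)/240) * J ^ 1 * a t ^ 1 * b t ^ 2 * α t ^ 1 * H t ^ 1 + ((3 : ℝ)/160) * J ^ 2 * b t ^ 2 * α t ^ 1 * H t ^ 1 + ((-2 : ℝ)/15) * b t ^ 4 * α t ^ 1 * H t ^ 1 + ((-1 : ℝ)/60) * a t ^ 1 * α t ^ 3 + ((1 : ℝ)/60) * a t ^ 2 * α t ^ 2 + ((11 : ℝ)/20) * J ^ 1 * b t ^ 4 * H t ^ 1 + ((1 : ℝ)/80) * J ^ 1 * a t ^ 1 * α t ^ 2 + ((-19 : ℝ)/60) * b t ^ 2 * α t ^ 2 + ((1 : ℝ)/60) * a t ^ 1 * b t ^ 2 * α t ^ 1 + ((3 : ℝ)/20) * J ^ 1 * b t ^ 2 * α t ^ 1 + ((-11 : ℝ)/5) * b t ^ 4) * h4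
  have h8 : b t ^ 8 = 0 := by
    nlinarith [sq_nonneg (b t ^ 3 * α t), sq_nonneg (b t ^ 2 * α t ^ 2), sq_nonneg (b t ^ 4)]
  exact pow_eq_zero_iff (by norm_num : (8:ℕ) ≠ 0) |>.mp h8
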